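/- arXiv:2402.17167 — 2 statements merged into one kernel-verified Lean document; each statement's English description precedes it below -/
import Mathlib

section
/- Let φ : [0,T] → ℝⁿ be a solution of ẋ = f(x,d(t)) with φ(0) = x₀ ∈ 𝒳₀, and suppose v : ℝⁿ × [0,T] → ℝ is continuously differentiable with v(x₀,0) < 0, v(x,t) ≥ 0 for all (x,t) ∈ ∂S × [0,T], and ∂v/∂t(x,t) + ⟨∇ₓv(x,t), f(x,d)⟩ ≤ 0 for all x in the closure of S, d ∈ D, t ∈ [0,T]. Then, if φ remains in the closure of S on [0,T], it satisfies φ(t) ∈ S for all t ∈ [0,T], i.e., the trajectory never touches ∂S. -/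
open Set MeasureTheory Topology Filter Asymptotics

set_option maxHeartbeats 2000000 in
/-- A trajectory φ of ẋ = f(x,d(t)) (integral form) starting at x₀ ∈ 𝒳₀,
together with a C¹ barrier function v with v(x₀,0) < 0, v ≥ 0 on ∂S × [0,T],
and Lv ≤ 0 on closure(S) × D × [0,T], never touches ∂S if it remains in closure(S):
φ(t) ∈ S for all t ∈ [0,T]. -/
theorem trajectory_avoids_boundary
    {n m : ℕ} (S X0 : Set (EuclideanSpace ℝ (Fin n))) (D : Set (EuclideanSpace ℝ (Fin m)))
    (hSopen : IsOpen S) (hSbdd : Bornology.IsBounded S)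
    (hX0 : IsCompact X0) (hX0S : X0 ⊆ S) (hD : IsCompact D)
    (T : ℝ) (hT : 0 < T)
    (f : EuclideanSpace ℝ (Fin n) → EuclideanSpace ℝ (Fin m) → EuclideanSpace ℝ (Fin n))
    (hf : Continuous fun p : EuclideanSpace ℝ (Fin n) × EuclideanSpace ℝ (Fin m) => f p.1 p.2)
    (d : ℝ → EuclideanSpace ℝ (Fin m)) (hd : Measurable d) (hdD : ∀ t, d t ∈ D)
    (x₀ : EuclideanSpace ℝ (Fin n)) (hx₀ : x₀ ∈ X0)
    (φ : ℝ → EuclideanSpace ℝ (Fin n)) (hφc : ContinuousOn φ (Icc 0 T))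
    (hφ0 : φ 0 = x₀)
    (hODE : ∀ t ∈ Icc (0:ℝ) T, φ t = x₀ + ∫ s in (0:ℝ)..t, f (φ s) (d s))
    (v : EuclideanSpace ℝ (Fin n) → ℝ → ℝ)
    (hv : ContDiff ℝ 1 (fun p : EuclideanSpace ℝ (Fin n) × ℝ => v p.1 p.2))
    (hv0 : v x₀ 0 < 0)
    (hvb : ∀ x ∈ frontier S, ∀ t ∈ Icc (0:ℝ) T, 0 ≤ v x t)
    (hLv : ∀ x ∈ closure S, ∀ dd ∈ D, ∀ t ∈ Icc (0:ℝ) T,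
      fderiv ℝ (fun s => v x s) t 1 + fderiv ℝ (fun y => v y t) x (f x dd) ≤ 0)
    (hstay : ∀ t ∈ Icc (0:ℝ) T, φ t ∈ closure S) :
    ∀ t ∈ Icc (0:ℝ) T, φ t ∈ S := by
  classical
  set V : EuclideanSpace ℝ (Fin n) × ℝ → ℝ := fun p => v p.1 p.2 with hVdef
  have hVdiff : Differentiable ℝ V := hv.differentiable one_ne_zero
  set D' : EuclideanSpace ℝ (Fin n) × ℝ → (EuclideanSpace ℝ (Fin n) × ℝ →L[ℝ] ℝ) := fun p => fderiv ℝ V p with hD'def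
  have hD'cont : Continuous D' := hv.continuous_fderiv one_ne_zero
  set h : ℝ → EuclideanSpace ℝ (Fin n) := fun s => f (φ s) (d s) with hhdef
  -- bound on h
  have hKφ : IsCompact (φ '' Icc 0 T) := isCompact_Icc.image_of_continuousOn hφc
  obtain ⟨C, hC⟩ : ∃ C, ∀ p ∈ (φ '' Icc 0 T) ×ˢ D, ‖f p.1 p.2‖ ≤ C :=
    (hKφ.prod hD).exists_bound_of_continuousOn hf.continuousOn
  set M := max C 0 with hMdef
  have hM0 : (0:ℝ) ≤ M := le_max_right _ _
  have hM1 : (1:ℝ) ≤ M + 1 := by linarith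
  have hhM : ∀ s ∈ Icc (0:ℝ) T, ‖h s‖ ≤ M := fun s hs =>
    le_trans (hC (φ s, d s) ⟨mem_image_of_mem φ hs, hdD s⟩) (le_max_left _ _)
  -- measurability and integrability of h
  have hmeas : AEStronglyMeasurable h (volume.restrict (Ioc (0:ℝ) T)) := by
    have hφm : AEMeasurable φ (volume.restrict (Ioc (0:ℝ) T)) :=
      (hφc.mono Ioc_subset_Icc_self).aemeasurable measurableSet_Ioc
    exact (hf.measurable.comp_aemeasurable (hφm.prodMk hd.aemeasurable)).aestronglyMeasurable
  have hIntT : IntervalIntegrable h volume 0 T := by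
    rw [intervalIntegrable_iff_integrableOn_Ioc_of_le hT.le]
    refine Integrable.mono' (integrable_const M) hmeas ?_
    filter_upwards [ae_restrict_mem measurableSet_Ioc] with s hs
    exact hhM s (Ioc_subset_Icc_self hs)
  have hInt : ∀ x ∈ Icc (0:ℝ) T, ∀ z ∈ Icc (0:ℝ) T, IntervalIntegrable h volume x z := by
    intro x hx z hz
    refine hIntT.mono_set ?_
    rw [uIcc_of_le hT.le]
    exact uIcc_subset_Icc hx hz
  -- difference formula
  have hφsub : ∀ x ∈ Icc (0:ℝ) T, ∀ z ∈ Icc (0:ℝ) T, φ z - φ x = ∫ s in x..z, h s := by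
    intro x hx z hz
    rw [hODE z hz, hODE x hx, add_sub_add_left_eq_sub]
    exact intervalIntegral.integral_interval_sub_left (hInt 0 (left_mem_Icc.2 hT.le) z hz)
      (hInt 0 (left_mem_Icc.2 hT.le) x hx)
  -- partial derivative identity
  have hpart : ∀ (x : EuclideanSpace ℝ (Fin n)) (t : ℝ) (w : EuclideanSpace ℝ (Fin n)),
      fderiv ℝ (fun s => v x s) t 1 + fderiv ℝ (fun y => v y t) x w = D' (x, t) (w, 1) := by
    intro x t w
    have hVd : HasFDerivAt V (D' (x, t)) (x, t) := (hVdiff (x, t)).hasFDerivAt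
    have h1 : HasFDerivAt (fun y : EuclideanSpace ℝ (Fin n) => v y t)
        ((D' (x, t)).comp ((ContinuousLinearMap.id ℝ (EuclideanSpace ℝ (Fin n))).prod 0)) x :=
      HasFDerivAt.comp (f := fun y : EuclideanSpace ℝ (Fin n) => (y, t)) x hVd ((hasFDerivAt_id x).prodMk (hasFDerivAt_const t x))
    have h2 : HasFDerivAt (fun s : ℝ => v x s)
        ((D' (x, t)).comp ((0 : ℝ →L[ℝ] EuclideanSpace ℝ (Fin n)).prod (ContinuousLinearMap.id ℝ ℝ))) t :=
      hVd.comp t ((hasFDerivAt_const x t).prodMk (hasFDerivAt_id t))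
    rw [h1.fderiv, h2.fderiv]
    simp only [ContinuousLinearMap.coe_comp', Function.comp_apply,
      ContinuousLinearMap.prod_apply, ContinuousLinearMap.coe_id',
      ContinuousLinearMap.zero_apply, id_eq]
    rw [← map_add]
    norm_num
  have hLv' : ∀ s ∈ Icc (0:ℝ) T, D' (φ s, s) (h s, 1) ≤ 0 := by
    intro s hs
    have := hLv (φ s) (hstay s hs) (d s) (hdD s) s hs
    rwa [hpart] at this
  -- the barrier value along the trajectory
  set g : ℝ → ℝ := fun t => v (φ t) t with hgdef
  have hgc : ContinuousOn g (Icc 0 T) :=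
    hv.continuous.comp_continuousOn (hφc.prodMk continuousOn_id)
  -- key monotone estimate
  have key : ∀ t ∈ Icc (0:ℝ) T, g t ≤ g 0 := by
    intro t ht
    refine image_le_of_liminf_slope_right_le_deriv_boundary (B := fun _ => g 0)
      (B' := fun _ => 0) hgc le_rfl continuousOn_const
      (fun x _ => hasDerivWithinAt_const x _ (g 0)) ?_ ht
    intro x hx r hr
    apply Filter.Eventually.frequently
    -- setup
    have hxI : x ∈ Icc (0:ℝ) T := ⟨hx.1, hx.2.le⟩
    set p : EuclideanSpace ℝ (Fin n) × ℝ := (φ x, x) with hpdef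
    have hMpos : (0:ℝ) < M + 1 := by linarith
    set η : ℝ := r / (4 * (M + 1)) with hηdef
    have hηpos : 0 < η := by positivity
    -- tendsto of (φ z, z) toward p from the right
    have hle : 𝓝[>] x ≤ 𝓝[Icc (0:ℝ) T] x := by
      rw [← nhdsWithin_Ioc_eq_nhdsGT hx.2]
      exact nhdsWithin_mono x (fun z hz => ⟨hx.1.trans hz.1.le, hz.2⟩)
    have htend : Filter.Tendsto (fun z => ((φ z, z) : EuclideanSpace ℝ (Fin n) × ℝ)) (𝓝[>] x) (𝓝 p) := by
      refine Filter.Tendsto.prodMk_nhds ?_ (tendsto_id.mono_right nhdsWithin_le_nhds)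
      exact ((hφc x hxI).mono_left hle)
    -- littleO estimate
    have hlo := (hVdiff p).hasFDerivAt.isLittleO
    have hB : ∀ᶠ z in 𝓝[>] x,
        ‖V (φ z, z) - V p - D' p ((φ z, z) - p)‖ ≤ η * ‖(φ z, z) - p‖ :=
      htend.eventually (hlo.def hηpos)
    -- continuity of derivative along trajectory
    have hGtend : Filter.Tendsto (fun s => D' (φ s, s)) (𝓝[>] x) (𝓝 (D' p)) :=
      (hD'cont.tendsto p).comp htend
    have hCev : ∀ᶠ s in 𝓝[>] x, ‖D' (φ s, s) - D' p‖ < η := by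
      have := Metric.tendsto_nhds.mp hGtend η hηpos
      filter_upwards [this] with s hs
      rwa [dist_eq_norm] at hs
    obtain ⟨δ, hδpos, hδ⟩ := Metric.mem_nhdsWithin_iff.mp hCev
    filter_upwards [Ioc_mem_nhdsGT_of_mem ⟨le_refl x, hx.2⟩,
      Ioo_mem_nhdsGT_of_mem ⟨le_refl x, lt_add_of_pos_right x hδpos⟩, hB]
      with z hzA hzδ hzB
    -- now z ∈ Ioc x T, z < x + δ
    have hxz : x < z := hzA.1
    have hzI : z ∈ Icc (0:ℝ) T := ⟨hx.1.trans hxz.le, hzA.2⟩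
    have hΔpos : 0 < z - x := sub_pos.2 hxz
    have hIcc_sub : Icc x z ⊆ Icc (0:ℝ) T := fun s hs => ⟨hx.1.trans hs.1, hs.2.trans hzA.2⟩
    -- the bound on the derivative difference on [x, z]
    have hGbound : ∀ s ∈ Icc x z, ‖D' (φ s, s) - D' p‖ ≤ η := by
      intro s hs
      rcases eq_or_lt_of_le hs.1 with rfl | hlt
      · simp [hpdef, hηpos.le]
      · exact le_of_lt (hδ ⟨Metric.mem_ball.2 (by
          rw [Real.dist_eq, abs_of_pos (sub_pos.2 hlt)]
          have := hs.2
          have := hzδ.2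
          linarith), hlt⟩)
    -- integrability facts on [x,z]
    have hIntxz : IntervalIntegrable h volume x z := hInt x hxI z hzI
    set P : ℝ → EuclideanSpace ℝ (Fin n) × ℝ := fun s => (h s, (1:ℝ)) with hPdef
    have hPnorm : ∀ s ∈ Icc (0:ℝ) T, ‖P s‖ ≤ M + 1 := by
      intro s hs
      rw [Prod.norm_def]
      refine max_le (le_trans (hhM s hs) (by linarith)) (by simp [hPdef]; linarith)
    have hPint : IntervalIntegrable P volume x z := by
      constructor
      · exact (hIntxz.1.prodMk (integrableOn_const measure_Ioc_lt_top.ne))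
      · exact (hIntxz.2.prodMk (integrableOn_const measure_Ioc_lt_top.ne))
    have hDpPint : IntervalIntegrable (fun s => D' p (P s)) volume x z :=
      ⟨(D' p).integrable_comp hPint.1, (D' p).integrable_comp hPint.2⟩
    have hGPmeas : AEStronglyMeasurable (fun s => D' (φ s, s) (P s))
        (volume.restrict (Ioc x z)) := by
      have hGm : AEStronglyMeasurable (fun s => D' (φ s, s)) (volume.restrict (Ioc x z)) := by
        refine ContinuousOn.aestronglyMeasurable ?_ measurableSet_Ioc
        refine (hD'cont.comp_continuousOn ((hφc.mono ?_).prodMk continuousOn_id))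
        exact fun s hs => hIcc_sub (Ioc_subset_Icc_self hs)
      have hPm : AEStronglyMeasurable P (volume.restrict (Ioc x z)) := by
        refine AEStronglyMeasurable.prodMk ?_ aestronglyMeasurable_const
        exact hmeas.mono_measure (Measure.restrict_mono
          (Ioc_subset_Ioc hx.1 hzA.2) le_rfl)
      exact isBoundedBilinearMap_apply.continuous.comp_aestronglyMeasurable
        (hGm.prodMk hPm)
    have hGPint : IntervalIntegrable (fun s => D' (φ s, s) (P s)) volume x z := by
      rw [intervalIntegrable_iff_integrableOn_Ioc_of_le hxz.le]
      refine Integrable.mono' (integrable_const ((‖D' p‖ + η) * (M + 1))) hGPmeas ?_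
      filter_upwards [ae_restrict_mem measurableSet_Ioc] with s hs
      have hsI : s ∈ Icc (0:ℝ) T := hIcc_sub (Ioc_subset_Icc_self hs)
      calc ‖D' (φ s, s) (P s)‖ ≤ ‖D' (φ s, s)‖ * ‖P s‖ := (D' (φ s, s)).le_opNorm _
        _ ≤ (‖D' p‖ + η) * (M + 1) := by
            refine mul_le_mul ?_ (hPnorm s hsI) (norm_nonneg _) (by positivity)
            have h1 := hGbound s (Ioc_subset_Icc_self hs)
            calc ‖D' (φ s, s)‖ = ‖D' p + (D' (φ s, s) - D' p)‖ := by
                  rw [show D' p + (D' (φ s, s) - D' p) = D' (φ s, s) by abel]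
              _ ≤ ‖D' p‖ + ‖D' (φ s, s) - D' p‖ := norm_add_le _ _
              _ ≤ ‖D' p‖ + η := by linarith
    -- compute (φ z, z) - p as an integral of P
    have hφdiff : φ z - φ x = ∫ s in x..z, h s := hφsub x hxI z hzI
    have hqp : ((φ z, z) : EuclideanSpace ℝ (Fin n) × ℝ) - p = ∫ s in x..z, P s := by
      have h1 := (ContinuousLinearMap.fst ℝ (EuclideanSpace ℝ (Fin n)) ℝ).intervalIntegral_comp_comm hPint
      have h2 := (ContinuousLinearMap.snd ℝ (EuclideanSpace ℝ (Fin n)) ℝ).intervalIntegral_comp_comm hPint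
      simp only [ContinuousLinearMap.coe_fst', ContinuousLinearMap.coe_snd'] at h1 h2
      refine Prod.ext ?_ ?_
      · rw [Prod.fst_sub, ← h1]
        simpa [hpdef] using hφdiff
      · rw [Prod.snd_sub, ← h2]
        simp [hPdef, hpdef]
    -- the norm bound on (φ z, z) - p
    have hΔnorm : ‖((φ z, z) : EuclideanSpace ℝ (Fin n) × ℝ) - p‖ ≤ (M + 1) * (z - x) := by
      have hφnorm : ‖φ z - φ x‖ ≤ M * |z - x| := by
        rw [hφdiff]
        refine intervalIntegral.norm_integral_le_of_norm_le_const ?_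
        intro s hs
        rw [uIoc_of_le hxz.le] at hs
        exact hhM s (hIcc_sub (Ioc_subset_Icc_self hs))
      have : ((φ z, z) : EuclideanSpace ℝ (Fin n) × ℝ) - p = (φ z - φ x, z - x) := rfl
      rw [this, Prod.norm_def]
      refine max_le ?_ ?_
      · calc ‖φ z - φ x‖ ≤ M * |z - x| := hφnorm
          _ = M * (z - x) := by rw [abs_of_pos hΔpos]
          _ ≤ (M + 1) * (z - x) := by nlinarith
      · rw [Real.norm_eq_abs, abs_of_pos hΔpos]; nlinarith
    -- main term estimate
    have hmain : D' p (((φ z, z) : EuclideanSpace ℝ (Fin n) × ℝ) - p) ≤ η * (M + 1) * (z - x) := by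
      rw [hqp, ← (D' p).intervalIntegral_comp_comm hPint]
      have hsplit : (∫ s in x..z, D' p (P s)) =
          (∫ s in x..z, (D' p (P s) - D' (φ s, s) (P s))) + ∫ s in x..z, D' (φ s, s) (P s) := by
        rw [← intervalIntegral.integral_add (hDpPint.sub hGPint) hGPint]
        congr 1
        ext s
        ring
      rw [hsplit]
      have hterm1 : (∫ s in x..z, (D' p (P s) - D' (φ s, s) (P s))) ≤ η * (M + 1) * (z - x) := by
        have hb := intervalIntegral.norm_integral_le_of_norm_le_const
          (C := η * (M + 1)) (f := fun s => D' p (P s) - D' (φ s, s) (P s))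
          (a := x) (b := z) ?_
        · calc (∫ s in x..z, (D' p (P s) - D' (φ s, s) (P s)))
              ≤ ‖∫ s in x..z, (D' p (P s) - D' (φ s, s) (P s))‖ := Real.le_norm_self _
            _ ≤ η * (M + 1) * |z - x| := hb
            _ = η * (M + 1) * (z - x) := by rw [abs_of_pos hΔpos]
        · intro s hs
          rw [uIoc_of_le hxz.le] at hs
          have hsIcc : s ∈ Icc x z := Ioc_subset_Icc_self hs
          show ‖D' p (P s) - D' (φ s, s) (P s)‖ ≤ η * (M + 1)
          rw [show D' p (P s) - D' (φ s, s) (P s) = (D' p - D' (φ s, s)) (P s) by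
            simp [ContinuousLinearMap.sub_apply]]
          calc ‖(D' p - D' (φ s, s)) (P s)‖ ≤ ‖D' p - D' (φ s, s)‖ * ‖P s‖ :=
                (D' p - D' (φ s, s)).le_opNorm _
            _ ≤ η * (M + 1) := by
                refine mul_le_mul ?_ (hPnorm s (hIcc_sub hsIcc)) (norm_nonneg _) hηpos.le
                rw [norm_sub_rev]
                exact hGbound s hsIcc
      have hterm2 : (∫ s in x..z, D' (φ s, s) (P s)) ≤ 0 := by
        have := intervalIntegral.integral_mono_on (f := fun s => D' (φ s, s) (P s))
          (g := fun _ => (0:ℝ)) hxz.le hGPint intervalIntegrable_const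
          (fun s hs => hLv' s (hIcc_sub hs))
        simpa using this
      linarith
    -- littleO term
    have hlittle : V (φ z, z) - V p - D' p ((φ z, z) - p) ≤ η * (M + 1) * (z - x) := by
      calc V (φ z, z) - V p - D' p ((φ z, z) - p)
          ≤ ‖V (φ z, z) - V p - D' p ((φ z, z) - p)‖ := Real.le_norm_self _
        _ ≤ η * ‖((φ z, z) : EuclideanSpace ℝ (Fin n) × ℝ) - p‖ := hzB
        _ ≤ η * ((M + 1) * (z - x)) := by
            exact mul_le_mul_of_nonneg_left hΔnorm hηpos.le
        _ = η * (M + 1) * (z - x) := by ring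
    -- combine
    have hgz : g z - g x ≤ 2 * η * (M + 1) * (z - x) := by
      have : g z - g x = (V (φ z, z) - V p - D' p ((φ z, z) - p)) + D' p ((φ z, z) - p) := by
        simp [hgdef, hVdef, hpdef]
      rw [this]
      linarith
    have hη2 : 2 * η * (M + 1) = r / 2 := by
      rw [hηdef]
      field_simp
      ring
    rw [slope_def_field]
    rw [div_lt_iff₀ hΔpos]
    calc g z - g x ≤ 2 * η * (M + 1) * (z - x) := hgz
      _ = r / 2 * (z - x) := by rw [hη2]
      _ < r * (z - x) := by nlinarith [mul_pos hr hΔpos]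
  -- conclude
  intro t ht
  have hgt : g t < 0 := by
    have h1 := key t ht
    have hg0 : g 0 = v x₀ 0 := by simp only [hgdef, hφ0]
    rw [hg0] at h1
    linarith
  by_contra hns
  have hfr : φ t ∈ frontier S := by
    rw [frontier, hSopen.interior_eq]
    exact ⟨hstay t ht, hns⟩
  have := hvb (φ t) hfr t ht
  exact absurd hgt (not_lt.2 this)
end

section
/- If there exists a continuously differentiable function v : ℝⁿ × [0,T] → ℝ with (i) v(x,0) < 0 for all x ∈ 𝒳₀, (ii) v(x,t) ≥ 0 for all (x,t) ∈ ∂S × [0,T], and (iii) ∂v/∂t(x,t) + ⟨∇ₓv(x,t), f(x,d)⟩ ≤ 0 for all (x,d,t) ∈ closure(S) × D × [0,T], then every solution φ of ẋ = f(x,d(t)) starting in 𝒳₀ at t = 0 remains in S for all t ∈ [0,T]. -/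
open Set

set_option maxHeartbeats 1000000 in
/-- soundness of time-dependent barrier certificates: if a C¹ function v
satisfies v(·,0) < 0 on 𝒳₀, v ≥ 0 on ∂S × [0,T], and Lv ≤ 0 on closure(S) × D × [0,T],
then every solution of ẋ = f(x,d(t)) starting in 𝒳₀ remains in S on [0,T]. -/
theorem barrier_certificate_soundness
    {n m : ℕ} (S X0 : Set (EuclideanSpace ℝ (Fin n))) (D : Set (EuclideanSpace ℝ (Fin m)))
    (hSopen : IsOpen S) (hSbdd : Bornology.IsBounded S)
    (hX0 : IsCompact X0) (hX0S : X0 ⊆ S) (hD : IsCompact D)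
    (T : ℝ) (hT : 0 < T)
    (f1 : EuclideanSpace ℝ (Fin n) → EuclideanSpace ℝ (Fin n))
    (f2 : EuclideanSpace ℝ (Fin n) → EuclideanSpace ℝ (Fin m) →L[ℝ] EuclideanSpace ℝ (Fin n))
    (f : EuclideanSpace ℝ (Fin n) → EuclideanSpace ℝ (Fin m) → EuclideanSpace ℝ (Fin n))
    (hfdef : ∀ x dd, f x dd = f1 x + f2 x dd)
    (hfLip : ∀ K : Set (EuclideanSpace ℝ (Fin n)), IsCompact K → ∃ L : ℝ,
      ∀ x ∈ K, ∀ y ∈ K, ∀ dd ∈ D, ‖f x dd - f y dd‖ ≤ L * ‖x - y‖)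
    (v : EuclideanSpace ℝ (Fin n) → ℝ → ℝ)
    (hv : ContDiff ℝ 1 (fun p : EuclideanSpace ℝ (Fin n) × ℝ => v p.1 p.2))
    (hv0 : ∀ x ∈ X0, v x 0 < 0)
    (hvb : ∀ x ∈ frontier S, ∀ t ∈ Icc (0:ℝ) T, 0 ≤ v x t)
    (hLv : ∀ x ∈ closure S, ∀ dd ∈ D, ∀ t ∈ Icc (0:ℝ) T,
      fderiv ℝ (fun s => v x s) t 1 + fderiv ℝ (fun y => v y t) x (f x dd) ≤ 0) :
    ∀ x₀ ∈ X0, ∀ d : ℝ → EuclideanSpace ℝ (Fin m), Measurable d → (∀ t, d t ∈ D) →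
      ∀ φ : ℝ → EuclideanSpace ℝ (Fin n), ContinuousOn φ (Icc 0 T) → φ 0 = x₀ →
        (∀ t ∈ Icc (0:ℝ) T, φ t = x₀ + ∫ s in (0:ℝ)..t, f (φ s) (d s)) →
        ∀ t ∈ Icc (0:ℝ) T, φ t ∈ S := by
  intro x₀ hx₀ d hdmeas hdD φ hφcont hφ0 hφeq
  -- basic notation and constants
  set K : Set (EuclideanSpace ℝ (Fin n)) := φ '' Icc 0 T with hKdef
  have hKcomp : IsCompact K := isCompact_Icc.image_of_continuousOn hφcont
  have hKmem : ∀ s ∈ Icc (0:ℝ) T, φ s ∈ K := fun s hs => mem_image_of_mem φ hs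
  obtain ⟨L₀, hL₀⟩ := hfLip K hKcomp
  set L : ℝ := max L₀ 0 with hLdef
  have hL0 : 0 ≤ L := le_max_right _ _
  have hL' : ∀ x ∈ K, ∀ y ∈ K, ∀ dd ∈ D, ‖f x dd - f y dd‖ ≤ L * ‖x - y‖ := by
    intro x hx y hy dd hdd
    exact (hL₀ x hx y hy dd hdd).trans
      (mul_le_mul_of_nonneg_right (le_max_left _ _) (norm_nonneg _))
  -- joint continuity of f on K ×ˢ D
  have hfcont : ContinuousOn
      (fun p : (EuclideanSpace ℝ (Fin n)) × (EuclideanSpace ℝ (Fin m)) => f p.1 p.2)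
      (K ×ˢ D) := by
    intro p hp
    have key : ∀ q : (EuclideanSpace ℝ (Fin n)) × (EuclideanSpace ℝ (Fin m)),
        f q.1 q.2 = (f q.1 q.2 - f p.1 q.2) + ((f2 p.1) (q.2 - p.2) + f p.1 p.2) := by
      intro q; simp only [hfdef, map_sub]; abel
    have h1 : Filter.Tendsto (fun q : _ × _ => f q.1 q.2 - f p.1 q.2)
        (nhdsWithin p (K ×ˢ D)) (nhds 0) := by
      apply squeeze_zero_norm' (a := fun q : _ × _ => L * ‖q.1 - p.1‖)
      · filter_upwards [self_mem_nhdsWithin] with q hq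
        exact hL' q.1 hq.1 p.1 hp.1 q.2 hq.2
      · have h2 : Filter.Tendsto (fun q : _ × _ => L * ‖q.1 - p.1‖)
            (nhds p) (nhds (L * ‖p.1 - p.1‖)) :=
          (((continuous_fst.sub continuous_const).norm).tendsto p).const_mul L
        simpa using h2.mono_left nhdsWithin_le_nhds
    have h2 : Filter.Tendsto (fun q : _ × _ => (f2 p.1) (q.2 - p.2) + f p.1 p.2)
        (nhdsWithin p (K ×ˢ D)) (nhds (f p.1 p.2)) := by
      have h3 : Filter.Tendsto (fun q : _ × _ => (f2 p.1) (q.2 - p.2) + f p.1 p.2)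
          (nhds p) (nhds ((f2 p.1) (p.2 - p.2) + f p.1 p.2)) :=
        (((f2 p.1).continuous.tendsto _).comp
          ((continuous_snd.sub continuous_const).tendsto p)).add_const _
      simpa using h3.mono_left nhdsWithin_le_nhds
    have h4 := (h1.add h2).congr (fun q => (key q).symm)
    rw [ContinuousWithinAt]
    simpa using h4
  -- bound M on ‖f‖ over K × D
  obtain ⟨M₀, hM₀⟩ := (hKcomp.prod hD).exists_bound_of_continuousOn hfcont
  set M : ℝ := max M₀ 0 with hMdef
  have hM0 : 0 ≤ M := le_max_right _ _
  have hMb : ∀ y ∈ K, ∀ dd ∈ D, ‖f y dd‖ ≤ M := fun y hy dd hdd =>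
    le_trans (hM₀ (y, dd) ⟨hy, hdd⟩) (le_max_left _ _)
  -- the vector field along the trajectory
  set F : ℝ → EuclideanSpace ℝ (Fin n) := fun s => f (φ s) (d s) with hFdef
  -- measurability and integrability of F on [0,T]
  have hGae : AEMeasurable (fun s => ((φ s, d s) :
      (EuclideanSpace ℝ (Fin n)) × (EuclideanSpace ℝ (Fin m))))
      (MeasureTheory.volume.restrict (Icc 0 T)) :=
    (hφcont.aemeasurable measurableSet_Icc).prodMk hdmeas.aemeasurable
  have hFae : AEMeasurable F (MeasureTheory.volume.restrict (Icc 0 T)) := by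
    have hmem : ∀ᵐ q ∂((MeasureTheory.volume.restrict (Icc 0 T)).map
        (fun s => ((φ s, d s) : _ × _))), q ∈ K ×ˢ D := by
      refine (MeasureTheory.ae_map_iff hGae ?_).2 ?_
      · exact (hKcomp.prod hD).isClosed.measurableSet
      · filter_upwards [MeasureTheory.ae_restrict_mem measurableSet_Icc] with s hs
        exact ⟨hKmem s hs, hdD s⟩
    have h1 : AEMeasurable (fun p : _ × _ => f p.1 p.2)
        ((MeasureTheory.volume.restrict (Icc 0 T)).map (fun s => ((φ s, d s) : _ × _))) := by
      have h2 := hfcont.aemeasurable ((hKcomp.prod hD).isClosed.measurableSet)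
        (μ := (MeasureTheory.volume.restrict (Icc 0 T)).map (fun s => ((φ s, d s) : _ × _)))
      rwa [MeasureTheory.Measure.restrict_eq_self_of_ae_mem hmem] at h2
    exact h1.comp_aemeasurable' hGae
  have hFint : MeasureTheory.IntegrableOn F (Icc 0 T) := by
    apply MeasureTheory.Integrable.mono'
      (MeasureTheory.integrableOn_const (s := Icc 0 T) (μ := MeasureTheory.volume) (C := M) measure_Icc_lt_top.ne enorm_ne_top)
      hFae.aestronglyMeasurable
    filter_upwards [MeasureTheory.ae_restrict_mem measurableSet_Icc] with s hs
    exact hMb _ (hKmem s hs) _ (hdD s)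
  have hFii : ∀ a ∈ Icc (0:ℝ) T, ∀ b ∈ Icc (0:ℝ) T, IntervalIntegrable F
      MeasureTheory.volume a b := by
    intro a ha b hb
    apply MeasureTheory.IntegrableOn.intervalIntegrable
    apply hFint.mono_set
    rw [uIcc_eq_union]
    exact union_subset (Icc_subset_Icc ha.1 hb.2) (Icc_subset_Icc hb.1 ha.2)
  have hφsub : ∀ a ∈ Icc (0:ℝ) T, ∀ b ∈ Icc (0:ℝ) T,
      φ b - φ a = ∫ s in a..b, F s := by
    intro a ha b hb
    rw [hφeq a ha, hφeq b hb]
    have := intervalIntegral.integral_interval_sub_left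
      (hFii 0 (left_mem_Icc.2 hT.le) b hb) (hFii 0 (left_mem_Icc.2 hT.le) a ha)
    rw [← this]; abel
  have hφdist : ∀ a ∈ Icc (0:ℝ) T, ∀ b ∈ Icc (0:ℝ) T, a ≤ b →
      ‖φ b - φ a‖ ≤ M * (b - a) := by
    intro a ha b hb hab
    rw [hφsub a ha b hb]
    have h1 : ‖∫ s in a..b, F s‖ ≤ M * |b - a| := by
      apply intervalIntegral.norm_integral_le_of_norm_le_const
      intro s hs
      rw [uIoc_of_le hab] at hs
      exact hMb _ (hKmem s ⟨ha.1.trans hs.1.le, hs.2.trans hb.2⟩) _ (hdD s)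
    rwa [abs_of_nonneg (sub_nonneg.2 hab)] at h1
  -- derivative facts about v
  have hVd : Differentiable ℝ (fun p : EuclideanSpace ℝ (Fin n) × ℝ => v p.1 p.2) :=
    hv.differentiable one_ne_zero
  have hpart : ∀ (x : EuclideanSpace ℝ (Fin n)) (t : ℝ),
      fderiv ℝ (fun s => v x s) t 1 =
        fderiv ℝ (fun p : EuclideanSpace ℝ (Fin n) × ℝ => v p.1 p.2) (x, t) (0, 1) ∧
      ∀ u, fderiv ℝ (fun y => v y t) x u =
        fderiv ℝ (fun p : EuclideanSpace ℝ (Fin n) × ℝ => v p.1 p.2) (x, t) (u, 0) := by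
    intro x t
    have hA : HasFDerivAt (fun p : EuclideanSpace ℝ (Fin n) × ℝ => v p.1 p.2)
        (fderiv ℝ (fun p : EuclideanSpace ℝ (Fin n) × ℝ => v p.1 p.2) (x, t)) (x, t) :=
      (hVd (x, t)).hasFDerivAt
    constructor
    · have h1 : HasFDerivAt (fun s : ℝ => ((x, s) : EuclideanSpace ℝ (Fin n) × ℝ))
          ((0 : ℝ →L[ℝ] EuclideanSpace ℝ (Fin n)).prod (ContinuousLinearMap.id ℝ ℝ)) t :=
        HasFDerivAt.prodMk (hasFDerivAt_const x t) (hasFDerivAt_id t)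
      have h2 : HasFDerivAt (fun s : ℝ => v x s)
          ((fderiv ℝ (fun p : EuclideanSpace ℝ (Fin n) × ℝ => v p.1 p.2) (x, t)).comp
            ((0 : ℝ →L[ℝ] EuclideanSpace ℝ (Fin n)).prod (ContinuousLinearMap.id ℝ ℝ))) t :=
        hA.comp t h1
      rw [h2.fderiv]
      simp
    · intro u
      have h1 : HasFDerivAt (fun y : EuclideanSpace ℝ (Fin n) => ((y, t) :
            EuclideanSpace ℝ (Fin n) × ℝ))
          ((ContinuousLinearMap.id ℝ (EuclideanSpace ℝ (Fin n))).prod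
            (0 : EuclideanSpace ℝ (Fin n) →L[ℝ] ℝ)) x :=
        HasFDerivAt.prodMk (hasFDerivAt_id x) (hasFDerivAt_const t x)
      have h2 : HasFDerivAt (fun y : EuclideanSpace ℝ (Fin n) => v y t)
          ((fderiv ℝ (fun p : EuclideanSpace ℝ (Fin n) × ℝ => v p.1 p.2) (x, t)).comp
            ((ContinuousLinearMap.id ℝ (EuclideanSpace ℝ (Fin n))).prod
              (0 : EuclideanSpace ℝ (Fin n) →L[ℝ] ℝ))) x :=
        by have h := hA.comp x h1; exact h
      rw [h2.fderiv]
      simp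
  -- the barrier value along the trajectory
  have hgcont : ContinuousOn (fun t => v (φ t) t) (Icc 0 T) :=
    hv.continuous.comp_continuousOn (hφcont.prodMk (continuousOn_id' _))
  -- the Dini-type slope estimate
  have hDini : ∀ t ∈ Ico (0:ℝ) T, φ t ∈ closure S → ∀ r : ℝ, 0 < r →
      ∀ᶠ z in nhdsWithin t (Ioi t), slope (fun t => v (φ t) t) t z < r := by
    intro t ht htS r hr
    obtain ⟨ht0, htT⟩ := ht
    have htIcc : t ∈ Icc (0:ℝ) T := ⟨ht0, htT.le⟩
    set A := fderiv ℝ (fun p : EuclideanSpace ℝ (Fin n) × ℝ => v p.1 p.2) (φ t, t) with hAdef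
    set B := A.comp (ContinuousLinearMap.inl ℝ (EuclideanSpace ℝ (Fin n)) ℝ) with hBdef
    have hBapp : ∀ u, B u = A (u, 0) := fun u => by
      simp [hBdef, ContinuousLinearMap.inl_apply]
    have hLv' : ∀ dd ∈ D, B (f (φ t) dd) ≤ - A (0, 1) := by
      intro dd hdd
      have h0 := hLv (φ t) htS dd hdd t htIcc
      rw [(hpart (φ t) t).1, (hpart (φ t) t).2 (f (φ t) dd)] at h0
      rw [hBapp]; linarith
    set C := ‖B‖ * (L * M) with hCdef
    have hM1 : (0:ℝ) < M + 1 := by linarith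
    set ε := r / (2 * (M + 1)) with hεdef
    have hε : 0 < ε := by positivity
    have hA : HasFDerivAt (fun p : EuclideanSpace ℝ (Fin n) × ℝ => v p.1 p.2) A (φ t, t) :=
      (hVd _).hasFDerivAt
    have hlittle := hA.isLittleO.def hε
    have hIocmem : Ioc t T ∈ nhdsWithin t (Ioi t) := Ioc_mem_nhdsGT htT
    have hle : nhdsWithin t (Ioi t) ≤ nhdsWithin t (Icc 0 T) :=
      nhdsWithin_le_of_mem (Filter.mem_of_superset hIocmem
        (fun z hz => ⟨ht0.trans hz.1.le, hz.2⟩))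
    have hφtend : Filter.Tendsto (fun z => ((φ z, z) : EuclideanSpace ℝ (Fin n) × ℝ))
        (nhdsWithin t (Ioi t)) (nhds (φ t, t)) :=
      (((hφcont t htIcc).mono_left hle)).prodMk_nhds
        (Filter.tendsto_id.mono_left nhdsWithin_le_nhds)
    have hq := hφtend.eventually hlittle
    have hCev : ∀ᶠ z in nhdsWithin t (Ioi t), C * (z - t) < r / 2 := by
      have h5 : Filter.Tendsto (fun z : ℝ => C * (z - t)) (nhdsWithin t (Ioi t)) (nhds 0) := by
        have h6 : Filter.Tendsto (fun z : ℝ => C * (z - t)) (nhds t) (nhds (C * (t - t))) :=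
          ((continuous_id.sub continuous_const).tendsto t).const_mul C
        simpa using h6.mono_left nhdsWithin_le_nhds
      exact h5.eventually_lt_const (by linarith)
    filter_upwards [hq, hCev, hIocmem] with z hz1 hz2 hz3
    have hzt : t < z := hz3.1
    have hzT : z ≤ T := hz3.2
    have hzIcc : z ∈ Icc (0:ℝ) T := ⟨ht0.trans hzt.le, hzT⟩
    have hpos : 0 < z - t := sub_pos.2 hzt
    have hφzt : ‖φ z - φ t‖ ≤ M * (z - t) := hφdist t htIcc z hzIcc hzt.le
    have hsubz : ((φ z, z) : EuclideanSpace ℝ (Fin n) × ℝ) - (φ t, t) = (φ z - φ t, z - t) := Prod.mk_sub_mk _ _ _ _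
    have hΔ : ‖((φ z, z) : EuclideanSpace ℝ (Fin n) × ℝ) - (φ t, t)‖ ≤ (M + 1) * (z - t) := by
      rw [hsubz, Prod.norm_def]
      apply max_le
      · nlinarith
      · simp only [Real.norm_eq_abs, abs_of_pos hpos]; nlinarith
    -- decompose A applied to the increment
    have hAΔ : A (((φ z, z) : EuclideanSpace ℝ (Fin n) × ℝ) - (φ t, t)) =
        B (φ z - φ t) + (z - t) * A (0, 1) := by
      rw [hsubz]
      have hsplit : ((φ z - φ t, z - t) : EuclideanSpace ℝ (Fin n) × ℝ) =
          (φ z - φ t, 0) + (z - t) • ((0 : EuclideanSpace ℝ (Fin n)), (1:ℝ)) := by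
        simp [Prod.ext_iff]
      rw [hsplit, map_add, map_smul, hBapp]
      simp [smul_eq_mul]
    have hint : B (φ z - φ t) = ∫ s in t..z, B (F s) := by
      rw [hφsub t htIcc z hzIcc, ← B.intervalIntegral_comp_comm (hFii t htIcc z hzIcc)]
    have hii : IntervalIntegrable F MeasureTheory.volume t z := hFii t htIcc z hzIcc
    have hBii : IntervalIntegrable (fun s => B (F s)) MeasureTheory.volume t z :=
      ⟨B.integrable_comp hii.1, B.integrable_comp hii.2⟩
    have hmono : (∫ s in t..z, B (F s)) ≤
        ∫ _s in t..z, (C * (z - t) + - A (0, 1)) := by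
      apply intervalIntegral.integral_mono_on hzt.le hBii intervalIntegrable_const
      intro s hs
      have hsIcc : s ∈ Icc (0:ℝ) T := ⟨ht0.trans hs.1, hs.2.trans hzT⟩
      have h1 : B (F s) = B (F s - f (φ t) (d s)) + B (f (φ t) (d s)) := by
        rw [← map_add]; congr 1; abel
      have h2 : B (F s - f (φ t) (d s)) ≤ ‖B‖ * (L * (M * (z - t))) := by
        have h2a : B (F s - f (φ t) (d s)) ≤ ‖B (F s - f (φ t) (d s))‖ :=
          le_trans (le_abs_self _) (le_of_eq (Real.norm_eq_abs _).symm)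
        have h2b : ‖B (F s - f (φ t) (d s))‖ ≤ ‖B‖ * ‖F s - f (φ t) (d s)‖ := B.le_opNorm _
        have h2c : ‖F s - f (φ t) (d s)‖ ≤ L * ‖φ s - φ t‖ :=
          hL' (φ s) (hKmem s hsIcc) (φ t) (hKmem t htIcc) (d s) (hdD s)
        have h2d : ‖φ s - φ t‖ ≤ M * (s - t) := hφdist t htIcc s hsIcc hs.1
        have h2e : M * (s - t) ≤ M * (z - t) :=
          mul_le_mul_of_nonneg_left (by linarith [hs.2]) hM0
        calc B (F s - f (φ t) (d s)) ≤ ‖B‖ * ‖F s - f (φ t) (d s)‖ := h2a.trans h2b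
          _ ≤ ‖B‖ * (L * (M * (z - t))) := by
              apply mul_le_mul_of_nonneg_left _ (norm_nonneg _)
              exact h2c.trans (mul_le_mul_of_nonneg_left (h2d.trans h2e) hL0)
      have h3 : B (f (φ t) (d s)) ≤ - A (0, 1) := hLv' (d s) (hdD s)
      have h4 : ‖B‖ * (L * (M * (z - t))) = C * (z - t) := by rw [hCdef]; ring
      show B (F s) ≤ C * (z - t) + - A (0, 1)
      linarith
    have hconst : (∫ _s in t..z, (C * (z - t) + - A (0, 1))) =
        (z - t) * (C * (z - t) + - A (0, 1)) := by
      rw [intervalIntegral.integral_const, smul_eq_mul]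
    -- combine everything
    have hvineq : v (φ z) z - v (φ t) t ≤
        A (((φ z, z) : EuclideanSpace ℝ (Fin n) × ℝ) - (φ t, t)) +
          ε * ‖((φ z, z) : EuclideanSpace ℝ (Fin n) × ℝ) - (φ t, t)‖ := by
      have h7 : |v (φ z) z - v (φ t) t -
          A (((φ z, z) : EuclideanSpace ℝ (Fin n) × ℝ) - (φ t, t))| ≤
          ε * ‖((φ z, z) : EuclideanSpace ℝ (Fin n) × ℝ) - (φ t, t)‖ := by
        have := hz1
        rwa [Real.norm_eq_abs] at this
      linarith [(abs_le.1 h7).2]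
    have hεΔ : ε * ‖((φ z, z) : EuclideanSpace ℝ (Fin n) × ℝ) - (φ t, t)‖ ≤
        ε * ((M + 1) * (z - t)) := mul_le_mul_of_nonneg_left hΔ hε.le
    have hεM : ε * ((M + 1) * (z - t)) = r / 2 * (z - t) := by
      rw [hεdef]; field_simp
    have htotal : v (φ z) z - v (φ t) t ≤ r / 2 * (z - t) + (z - t) * (C * (z - t)) := by
      have h8 : A (((φ z, z) : EuclideanSpace ℝ (Fin n) × ℝ) - (φ t, t)) ≤
          (z - t) * (C * (z - t)) := by
        rw [hAΔ, hint]
        have h9 := hmono.trans (le_of_eq hconst)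
        nlinarith
      linarith
    rw [slope_def_field, div_lt_iff₀ hpos]
    have h10 : (z - t) * (C * (z - t)) < (z - t) * (r / 2) :=
      mul_lt_mul_of_pos_left hz2 hpos
    linarith
  -- main argument: first exit time
  intro t₁ ht₁
  by_contra ht₁S
  set Bad : Set ℝ := Icc 0 T ∩ φ ⁻¹' Sᶜ with hBaddef
  have hBadne : Bad.Nonempty := ⟨t₁, ht₁, ht₁S⟩
  have hBadclosed : IsClosed Bad :=
    hφcont.preimage_isClosed_of_isClosed isClosed_Icc hSopen.isClosed_compl
  have hBdd : BddBelow Bad := ⟨0, fun x hx => hx.1.1⟩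
  set τ := sInf Bad with hτdef
  have hτmem : τ ∈ Bad := hBadclosed.csInf_mem hBadne hBdd
  have hτIcc : τ ∈ Icc (0:ℝ) T := hτmem.1
  have hτS : φ τ ∉ S := hτmem.2
  have hτpos : 0 < τ := by
    rcases lt_or_eq_of_le hτIcc.1 with h | h
    · exact h
    · exfalso; apply hτS; rw [← h, hφ0]; exact hX0S hx₀
  have hpre : ∀ s, 0 ≤ s → s < τ → φ s ∈ S := by
    intro s h0 hs
    by_contra h
    exact absurd hs (not_lt.2 (csInf_le hBdd ⟨⟨h0, hs.le.trans hτIcc.2⟩, h⟩))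
  have hfront : φ τ ∈ frontier S := by
    have hsub2 : Ico (0:ℝ) τ ⊆ Icc 0 T := fun s hs => ⟨hs.1, hs.2.le.trans hτIcc.2⟩
    have hcw : ContinuousWithinAt φ (Ico 0 τ) τ := (hφcont τ hτIcc).mono hsub2
    have hτcl : τ ∈ closure (Ico (0:ℝ) τ) := by
      rw [closure_Ico hτpos.ne]; exact ⟨hτIcc.1, le_rfl⟩
    have h1 : φ τ ∈ closure (φ '' Ico 0 τ) := hcw.mem_closure_image hτcl
    have h2 : φ '' Ico 0 τ ⊆ S := by
      rintro _ ⟨s, hs, rfl⟩; exact hpre s hs.1 hs.2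
    have hφτcl : φ τ ∈ closure S := closure_mono h2 h1
    rw [hSopen.frontier_eq]; exact ⟨hφτcl, hτS⟩
  -- monotonicity of the barrier value up to time τ
  have hgmon : v (φ τ) τ ≤ v (φ 0) 0 := by
    have hmain := image_le_of_liminf_slope_right_le_deriv_boundary
      (f := fun t => v (φ t) t) (a := 0) (b := τ)
      (B := fun _ => v (φ 0) 0) (B' := fun _ => 0)
      (hgcont.mono (Icc_subset_Icc_right hτIcc.2)) le_rfl continuousOn_const
      (fun x _ => hasDerivWithinAt_const x _ _)
      ?_
    · exact hmain (right_mem_Icc.2 hτpos.le)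
    · intro x hx r hr
      have hx' : x ∈ Ico (0:ℝ) T := ⟨hx.1, lt_of_lt_of_le hx.2 hτIcc.2⟩
      exact (hDini x hx' (subset_closure (hpre x hx.1 hx.2)) r hr).frequently
  have hfin1 : 0 ≤ v (φ τ) τ := hvb (φ τ) hfront τ hτIcc
  have hfin2 : v (φ 0) 0 < 0 := by rw [hφ0]; exact hv0 x₀ hx₀
  linarith
end
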